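/- In the variable widget (components P_{x_i}, P_{x̄_i} sharing a 2-ring) used in the BAP_r reduction, with a total token budget of n for n variable widgets, every deadlock-free token assignment must assign at least one token to P_{x_i} or P_{x̄_i} for each i, and hence exactly one token per widget pair. -/
import Mathlib


/-! Formal framework: communication graphs and the red/yellow/green colouring game
(Brodsky–Pedersen–Wagner, "On the Complexity of Buffer Allocation in Message Passing Systems"),
with receive-side token pools. -/

inductive Colour : Type
  | red | yellow | green
deriving DecidableEq

/-- A communication graph: vertices are partitioned into start/send/receive/end vertices,
`pred u v` means `u` is the component predecessor of `v` (a process arc `u → v`),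
`matched u v` is a communication arc from send `u` to its matching receive `v`,
`comp v` is the index of the process component of `v`, and `pos v` is the position
of `v` within its component chain. -/
structure CommGraph (V : Type) where
  isStart : V → Prop
  isSend : V → Prop
  isRecv : V → Prop
  isEnd : V → Prop
  pred : V → V → Prop
  matched : V → V → Prop
  comp : V → ℕ
  pos : V → ℕ

namespace CommGraph

variable {V : Type}

/-- An arc of the communication graph (process arc or communication arc). -/
def GArc (G : CommGraph V) (u v : V) : Prop := G.pred u v ∨ G.matched u v

/-- Well-formedness of a communication graph: the vertex kinds partition `V`,
components are chains (unique predecessors, positions increase along process arcs),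
communication arcs go from sends to receives in different components and form a
partial matching, and the graph is acyclic (arcs admit no infinite descent). -/
structure WF (G : CommGraph V) : Prop where
  kinds : ∀ v, G.isStart v ∨ G.isSend v ∨ G.isRecv v ∨ G.isEnd v
  start_not_send : ∀ v, G.isStart v → ¬ G.isSend v
  start_not_recv : ∀ v, G.isStart v → ¬ G.isRecv v
  start_not_end : ∀ v, G.isStart v → ¬ G.isEnd v
  send_not_recv : ∀ v, G.isSend v → ¬ G.isRecv v
  send_not_end : ∀ v, G.isSend v → ¬ G.isEnd v
  recv_not_end : ∀ v, G.isRecv v → ¬ G.isEnd v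
  pred_unique : ∀ {u u' v}, G.pred u v → G.pred u' v → u = u'
  pred_comp : ∀ {u v}, G.pred u v → G.comp u = G.comp v
  pred_pos : ∀ {u v}, G.pred u v → G.pos v = G.pos u + 1
  start_no_pred : ∀ {u v}, G.pred u v → ¬ G.isStart v
  has_pred : ∀ v, ¬ G.isStart v → ∃ u, G.pred u v
  matched_send : ∀ {u v}, G.matched u v → G.isSend u
  matched_recv : ∀ {u v}, G.matched u v → G.isRecv v
  matched_comp : ∀ {u v}, G.matched u v → G.comp u ≠ G.comp v
  matched_unique_left : ∀ {u u' v}, G.matched u v → G.matched u' v → u = u'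
  matched_unique_right : ∀ {u v v'}, G.matched u v → G.matched u v' → v = v'
  send_has_match : ∀ v, G.isSend v → ∃ w, G.matched v w
  recv_has_match : ∀ v, G.isRecv v → ∃ w, G.matched w v
  dag : WellFounded fun u v => G.GArc u v

end CommGraph

/-- A state of the colouring game: the colouring, which receive vertices currently
hold a token on their incident communication arc, and the number of available
tokens in each (per-process, receive-side) pool. -/
structure St (V : Type) where
  col : V → Colour
  tok : V → Bool
  pool : ℕ → ℕ

/-- The names of the colouring rules. -/
inductive Rule : Type
  | sendYel | recvYel | recvYelTok | sendGrn | recvGrn | endYel | endGrn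
deriving DecidableEq

variable {V : Type}

/-- One move of the colouring game (receive-side buffering: the token used by the
buffered-receive rule `recvYelTok` comes from the pool of the receiving component,
and is returned when the receive turns green). -/
inductive Step [DecidableEq V] (G : CommGraph V) : Rule → St V → St V → Prop
  | sendYel {s : St V} {v u : V} :
      G.isSend v → s.col v = .red → G.pred u v → s.col u = .green →
      Step G .sendYel s ⟨Function.update s.col v .yellow, s.tok, s.pool⟩
  | recvYel {s : St V} {v u w : V} :
      G.isRecv v → s.col v = .red → G.matched w v → s.col w = .yellow →
      G.pred u v → s.col u = .green →
      Step G .recvYel s ⟨Function.update s.col v .yellow, s.tok, s.pool⟩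
  | recvYelTok {s : St V} {v w : V} :
      G.isRecv v → s.col v = .red → G.matched w v → s.col w = .yellow →
      0 < s.pool (G.comp v) →
      Step G .recvYelTok s ⟨Function.update s.col v .yellow,
        Function.update s.tok v true,
        Function.update s.pool (G.comp v) (s.pool (G.comp v) - 1)⟩
  | sendGrn {s : St V} {v r : V} :
      G.isSend v → s.col v = .yellow → G.matched v r → s.col r = .yellow →
      Step G .sendGrn s ⟨Function.update s.col v .green, s.tok, s.pool⟩
  | recvGrn {s : St V} {v u w : V} :
      G.isRecv v → s.col v = .yellow → G.pred u v → s.col u = .green →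
      G.matched w v → s.col w = .green →
      Step G .recvGrn s ⟨Function.update s.col v .green,
        Function.update s.tok v false,
        if s.tok v then
          Function.update s.pool (G.comp v) (s.pool (G.comp v) + 1)
        else s.pool⟩
  | endYel {s : St V} {v u : V} :
      G.isEnd v → s.col v = .red → G.pred u v → s.col u = .green →
      Step G .endYel s ⟨Function.update s.col v .yellow, s.tok, s.pool⟩
  | endGrn {s : St V} {v : V} :
      G.isEnd v → s.col v = .yellow →
      Step G .endGrn s ⟨Function.update s.col v .green, s.tok, s.pool⟩

/-- `IsSeq G s l` : the list `l` of (rule, state) pairs is a valid colouring sequence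
starting from state `s`. -/
def IsSeq [DecidableEq V] (G : CommGraph V) : St V → List (Rule × St V) → Prop
  | _, [] => True
  | s, p :: l => Step G p.1 s p.2 ∧ IsSeq G p.2 l

/-- The list of states visited by a colouring sequence. -/
def states (s0 : St V) (l : List (Rule × St V)) : List (St V) :=
  s0 :: l.map Prod.snd

/-- The final state of a colouring sequence. -/
def finalSt (s0 : St V) (l : List (Rule × St V)) : St V :=
  (states s0 l).getLast (by simp [states])

open Classical in
/-- The initial state: start vertices green, all others red, no tokens placed,
token pools given by the token assignment `B` (pool of component `i` holds `B i`). -/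
noncomputable def init (G : CommGraph V) (B : ℕ → ℕ) : St V :=
  ⟨fun v => if G.isStart v then Colour.green else Colour.red, fun _ => false, B⟩

/-- A state from which no colouring rule applies. -/
def MaximalFrom [DecidableEq V] (G : CommGraph V) (s : St V) : Prop :=
  ∀ ρ t, ¬ Step G ρ s t

/-- A state is complete when every vertex is green. -/
def Completes (s : St V) : Prop := ∀ v, s.col v = Colour.green

/-- A deadlocking colouring sequence from `s0`: a maximal sequence whose final
colouring has a non-green vertex. -/
def Deadlocks [DecidableEq V] (G : CommGraph V) (s0 : St V) (l : List (Rule × St V)) : Prop :=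
  IsSeq G s0 l ∧ MaximalFrom G (finalSt s0 l) ∧ ¬ Completes (finalSt s0 l)

/-- The system is safe (deadlock free) under token assignment `B`:
every maximal colouring sequence completes. -/
def DeadlockFree [DecidableEq V] (G : CommGraph V) (B : ℕ → ℕ) : Prop :=
  ∀ l, IsSeq G (init G B) l → MaximalFrom G (finalSt (init G B) l) →
    Completes (finalSt (init G B) l)

/-- A state blocks: some yellow send has a matching red receive to which the
buffered-receive rule cannot be applied (no token available). -/
def Blocked (G : CommGraph V) (s : St V) : Prop :=
  ∃ v r, G.matched v r ∧ s.col v = Colour.yellow ∧ s.col r = Colour.red ∧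
    s.pool (G.comp r) = 0

/-- The graph is block free under token assignment `B`: no colouring sequence blocks. -/
def BlockFree [DecidableEq V] (G : CommGraph V) (B : ℕ → ℕ) : Prop :=
  ∀ l, IsSeq G (init G B) l → ¬ Blocked G (finalSt (init G B) l)


/-! ### Auxiliary machinery -/

namespace BAPAux

open Relation

/-- Numeric rank of a colour. -/
def rank : Colour → ℕ
  | .red => 0
  | .yellow => 1
  | .green => 2

lemma rank_le_two (c : Colour) : rank c ≤ 2 := by cases c <;> simp [rank]

variable {V : Type} [DecidableEq V]

/-- Each step recolours exactly one vertex, strictly increasing its rank. -/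
lemma step_col {G : CommGraph V} {ρ : Rule} {s t : St V} (h : Step G ρ s t) :
    ∃ v c, t.col = Function.update s.col v c ∧ rank (s.col v) < rank c := by
  cases h <;> exact ⟨_, _, rfl, by simp only [*]; decide⟩

lemma finalSt_nil (s0 : St V) : finalSt s0 ([] : List (Rule × St V)) = s0 := rfl

lemma finalSt_cons (s0 t : St V) (ρ : Rule) (l : List (Rule × St V)) :
    finalSt s0 ((ρ, t) :: l) = finalSt t l := by
  simp [finalSt, states, List.getLast_cons]

section Meas
variable [Fintype V]

/-- Total colour rank of a state. -/
def meas (s : St V) : ℕ := ∑ v : V, rank (s.col v)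

lemma meas_le (s : St V) : meas s ≤ 2 * Fintype.card V := by
  calc meas s ≤ ∑ _v : V, 2 := Finset.sum_le_sum fun v _ => rank_le_two _
    _ = 2 * Fintype.card V := by simp [Finset.sum_const, Finset.card_univ, smul_eq_mul, mul_comm]

lemma meas_split (f : V → Colour) (v : V) :
    (∑ x : V, rank (f x)) = rank (f v) + ∑ x ∈ Finset.univ.erase v, rank (f x) :=
  (Finset.add_sum_erase _ _ (Finset.mem_univ v)).symm

lemma step_meas {G : CommGraph V} {ρ : Rule} {s t : St V} (h : Step G ρ s t) :
    meas s < meas t := by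
  obtain ⟨v, c, hc, hlt⟩ := step_col h
  have h1 : meas s = rank (s.col v) + ∑ x ∈ Finset.univ.erase v, rank (s.col x) :=
    meas_split _ v
  have h2 : meas t = rank c + ∑ x ∈ Finset.univ.erase v, rank (s.col x) := by
    rw [meas, meas_split (t.col) v, hc]
    congr 1
    · simp [Function.update]
    · refine Finset.sum_congr rfl fun x hx => ?_
      have hxv : x ≠ v := (Finset.mem_erase.mp hx).1
      simp [Function.update, hxv]
  omega

/-- Every state admits a maximal colouring sequence. -/
lemma exists_maximal (G : CommGraph V) (s0 : St V) :
    ∃ l, IsSeq G s0 l ∧ MaximalFrom G (finalSt s0 l) := by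
  suffices h : ∀ N (s : St V), 2 * Fintype.card V ≤ meas s + N →
      ∃ l, IsSeq G s l ∧ MaximalFrom G (finalSt s l) from
    h (2 * Fintype.card V) s0 (by omega)
  intro N
  induction N with
  | zero =>
    intro s hN
    refine ⟨[], trivial, ?_⟩
    intro ρ t hst
    rw [finalSt_nil] at hst
    have h1 := step_meas hst
    have h2 := meas_le t
    omega
  | succ N ih =>
    intro s hN
    by_cases hmax : MaximalFrom G s
    · exact ⟨[], trivial, hmax⟩
    · simp only [MaximalFrom, not_forall, not_not] at hmax
      obtain ⟨ρ, t, hst⟩ := hmax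
      obtain ⟨l, hl, hm⟩ := ih t (by have := step_meas hst; omega)
      exact ⟨(ρ, t) :: l, ⟨hst, hl⟩, by rwa [finalSt_cons]⟩

end Meas

/-- Invariants preserved by every step hold at the final state. -/
lemma seq_inv {G : CommGraph V} (P : St V → Prop)
    (hP : ∀ ρ s t, P s → Step G ρ s t → P t) :
    ∀ (l : List (Rule × St V)) (s0 : St V), P s0 → IsSeq G s0 l → P (finalSt s0 l)
  | [], s0, h0, _ => h0
  | (ρ, t) :: l, s0, h0, hseq => by
    rw [finalSt_cons]
    exact seq_inv P hP l t (hP ρ s0 t h0 hseq.1) hseq.2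

/-- Components are constant along chains. -/
lemma tg_comp {G : CommGraph V} (hwf : G.WF) {a v : V}
    (h : TransGen G.pred a v) : G.comp v = G.comp a := by
  induction h with
  | single h1 => exact (hwf.pred_comp h1).symm
  | tail _ h2 ih => exact (hwf.pred_comp h2).symm.trans ih

/-- Predecessor of a vertex strictly after `a` is `a` or strictly after `a`. -/
lemma tg_pred_cases {G : CommGraph V} (hwf : G.WF) {a u v : V}
    (h : TransGen G.pred a v) (hu : G.pred u v) :
    u = a ∨ TransGen G.pred a u := by
  cases h with
  | single h1 => exact Or.inl (hwf.pred_unique hu h1)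
  | tail h1 h2 => exact Or.inr ((hwf.pred_unique hu h2) ▸ h1)

lemma tg_not_start {G : CommGraph V} (hwf : G.WF) {a v : V}
    (h : TransGen G.pred a v) : ¬ G.isStart v := by
  cases h with
  | single h1 => exact hwf.start_no_pred h1
  | tail _ h2 => exact hwf.start_no_pred h2

/-- The widget invariant for a starved 2-ring with send `a` before receive `b`
in component `P`, send `a'` before receive `b'` in component `Q`. -/
def WInv (G : CommGraph V) (P Q : ℕ) (a a' : V) (s : St V) : Prop :=
  s.pool P = 0 ∧ s.pool Q = 0 ∧
  (∀ v, G.comp v = P ∨ G.comp v = Q → s.tok v = false) ∧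
  (∀ v, TransGen G.pred a v → s.col v = .red) ∧
  (∀ v, TransGen G.pred a' v → s.col v = .red) ∧
  s.col a ≠ .green ∧ s.col a' ≠ .green

lemma winv_step {G : CommGraph V} (hwf : G.WF) {P Q : ℕ} {a b a' b' : V}
    (ha : G.isSend a) (hca : G.comp a = P)
    (htab : TransGen G.pred a b)
    (ha' : G.isSend a') (hca' : G.comp a' = Q)
    (htab' : TransGen G.pred a' b')
    (hm1 : G.matched a b') (hm2 : G.matched a' b)
    {ρ : Rule} {s t : St V} (hs : WInv G P Q a a' s) (hst : Step G ρ s t) :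
    WInv G P Q a a' t := by
  obtain ⟨hpP, hpQ, htok, hredA, hredA', hga, hga'⟩ := hs
  cases hst with
  | sendYel hv hcv hu hcu =>
    rename_i v u
    refine ⟨hpP, hpQ, htok, ?_, ?_, ?_, ?_⟩
    · intro w hw
      by_cases hwv : w = v
      · subst hwv
        rcases tg_pred_cases hwf hw hu with h | h
        · exact absurd hcu (h ▸ hga)
        · rw [hredA u h] at hcu; exact absurd hcu (by simp)
      · simpa [Function.update, hwv] using hredA w hw
    · intro w hw
      by_cases hwv : w = v
      · subst hwv
        rcases tg_pred_cases hwf hw hu with h | h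
        · exact absurd hcu (h ▸ hga')
        · rw [hredA' u h] at hcu; exact absurd hcu (by simp)
      · simpa [Function.update, hwv] using hredA' w hw
    · by_cases hav : a = v <;> simp [Function.update, hav, hga]
    · by_cases hav : a' = v <;> simp [Function.update, hav, hga']
  | recvYel hv hcv hmw hcw hu hcu =>
    rename_i v u w
    refine ⟨hpP, hpQ, htok, ?_, ?_, ?_, ?_⟩
    · intro z hz
      by_cases hzv : z = v
      · subst hzv
        rcases tg_pred_cases hwf hz hu with h | h
        · exact absurd hcu (h ▸ hga)
        · rw [hredA u h] at hcu; exact absurd hcu (by simp)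
      · simpa [Function.update, hzv] using hredA z hz
    · intro z hz
      by_cases hzv : z = v
      · subst hzv
        rcases tg_pred_cases hwf hz hu with h | h
        · exact absurd hcu (h ▸ hga')
        · rw [hredA' u h] at hcu; exact absurd hcu (by simp)
      · simpa [Function.update, hzv] using hredA' z hz
    · by_cases hav : a = v <;> simp [Function.update, hav, hga]
    · by_cases hav : a' = v <;> simp [Function.update, hav, hga']
  | recvYelTok hv hcv hmw hcw hpool =>
    rename_i v w
    have hcvP : G.comp v ≠ P := fun h => by rw [h, hpP] at hpool; omega
    have hcvQ : G.comp v ≠ Q := fun h => by rw [h, hpQ] at hpool; omega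
    refine ⟨?_, ?_, ?_, ?_, ?_, ?_, ?_⟩
    · simpa [Function.update, Ne.symm hcvP] using hpP
    · simpa [Function.update, Ne.symm hcvQ] using hpQ
    · intro z hz
      by_cases hzv : z = v
      · subst hzv; rcases hz with h | h
        · exact absurd h hcvP
        · exact absurd h hcvQ
      · simpa [Function.update, hzv] using htok z hz
    · intro z hz
      by_cases hzv : z = v
      · subst hzv
        exact absurd ((tg_comp hwf hz).trans hca) hcvP
      · simpa [Function.update, hzv] using hredA z hz
    · intro z hz
      by_cases hzv : z = v
      · subst hzv
        exact absurd ((tg_comp hwf hz).trans hca') hcvQ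
      · simpa [Function.update, hzv] using hredA' z hz
    · by_cases hav : a = v <;> simp [Function.update, hav, hga]
    · by_cases hav : a' = v <;> simp [Function.update, hav, hga']
  | sendGrn hv hcv hmr hcr =>
    rename_i v rr
    have hva : v ≠ a := by
      rintro rfl
      have : rr = b' := hwf.matched_unique_right hmr hm1
      rw [this, hredA' b' htab'] at hcr
      exact absurd hcr (by simp)
    have hva' : v ≠ a' := by
      rintro rfl
      have : rr = b := hwf.matched_unique_right hmr hm2
      rw [this, hredA b htab] at hcr
      exact absurd hcr (by simp)
    refine ⟨hpP, hpQ, htok, ?_, ?_, ?_, ?_⟩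
    · intro z hz
      by_cases hzv : z = v
      · subst hzv; rw [hredA z hz] at hcv; exact absurd hcv (by simp)
      · simpa [Function.update, hzv] using hredA z hz
    · intro z hz
      by_cases hzv : z = v
      · subst hzv; rw [hredA' z hz] at hcv; exact absurd hcv (by simp)
      · simpa [Function.update, hzv] using hredA' z hz
    · simpa [Function.update, Ne.symm hva] using hga
    · simpa [Function.update, Ne.symm hva'] using hga'
  | recvGrn hv hcv hu hcu hmw hcw =>
    rename_i v u w
    have hva : v ≠ a := fun h => hwf.send_not_recv a ha (h ▸ hv)
    have hva' : v ≠ a' := fun h => hwf.send_not_recv a' ha' (h ▸ hv)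
    have hvtok : s.tok v = true → G.comp v ≠ P ∧ G.comp v ≠ Q := by
      intro h
      constructor <;> intro hc
      · rw [htok v (Or.inl hc)] at h; simp at h
      · rw [htok v (Or.inr hc)] at h; simp at h
    refine ⟨?_, ?_, ?_, ?_, ?_, ?_, ?_⟩
    · by_cases h : s.tok v
      · obtain ⟨h1, _⟩ := hvtok h
        simpa [h, Function.update, Ne.symm h1] using hpP
      · simpa [h] using hpP
    · by_cases h : s.tok v
      · obtain ⟨_, h2⟩ := hvtok h
        simpa [h, Function.update, Ne.symm h2] using hpQ
      · simpa [h] using hpQ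
    · intro z hz
      by_cases hzv : z = v
      · subst hzv; simp [Function.update]
      · simpa [Function.update, hzv] using htok z hz
    · intro z hz
      by_cases hzv : z = v
      · subst hzv; rw [hredA z hz] at hcv; exact absurd hcv (by simp)
      · simpa [Function.update, hzv] using hredA z hz
    · intro z hz
      by_cases hzv : z = v
      · subst hzv; rw [hredA' z hz] at hcv; exact absurd hcv (by simp)
      · simpa [Function.update, hzv] using hredA' z hz
    · simpa [Function.update, Ne.symm hva] using hga
    · simpa [Function.update, Ne.symm hva'] using hga'
  | endYel hv hcv hu hcu =>
    rename_i v u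
    refine ⟨hpP, hpQ, htok, ?_, ?_, ?_, ?_⟩
    · intro z hz
      by_cases hzv : z = v
      · subst hzv
        rcases tg_pred_cases hwf hz hu with h | h
        · exact absurd hcu (h ▸ hga)
        · rw [hredA u h] at hcu; exact absurd hcu (by simp)
      · simpa [Function.update, hzv] using hredA z hz
    · intro z hz
      by_cases hzv : z = v
      · subst hzv
        rcases tg_pred_cases hwf hz hu with h | h
        · exact absurd hcu (h ▸ hga')
        · rw [hredA' u h] at hcu; exact absurd hcu (by simp)
      · simpa [Function.update, hzv] using hredA' z hz
    · by_cases hav : a = v <;> simp [Function.update, hav, hga]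
    · by_cases hav : a' = v <;> simp [Function.update, hav, hga']
  | endGrn hv hcv =>
    rename_i v
    have hva : v ≠ a := fun h => hwf.send_not_end a ha (h ▸ hv)
    have hva' : v ≠ a' := fun h => hwf.send_not_end a' ha' (h ▸ hv)
    refine ⟨hpP, hpQ, htok, ?_, ?_, ?_, ?_⟩
    · intro z hz
      by_cases hzv : z = v
      · subst hzv; rw [hredA z hz] at hcv; exact absurd hcv (by simp)
      · simpa [Function.update, hzv] using hredA z hz
    · intro z hz
      by_cases hzv : z = v
      · subst hzv; rw [hredA' z hz] at hcv; exact absurd hcv (by simp)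
      · simpa [Function.update, hzv] using hredA' z hz
    · simpa [Function.update, Ne.symm hva] using hga
    · simpa [Function.update, Ne.symm hva'] using hga'

end BAPAux


/-- **Variable-widget property of the BAP_r reduction.** Suppose `G` contains, for
each `i < n`, a 2-ring between the two components `p i` and `q i` (send `s i`
before receive `r i` in component `p i`, send `s' i` before receive `r' i` in
component `q i`, cross-matched), with all `2n` components pairwise distinct, and
the total token budget over the `n` widget pairs is at most `n`. Then every
deadlock-free token assignment gives at least one token to `p i` or `q i` for each
`i`, hence exactly one token per widget pair. -/
theorem variable_widget_token_forced {V : Type} [DecidableEq V] [Fintype V]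
    (G : CommGraph V) (hwf : G.WF) (n : ℕ) (B : ℕ → ℕ)
    (p q : ℕ → ℕ) (s r s' r' : ℕ → V)
    (hring : ∀ i < n,
      G.isSend (s i) ∧ G.isRecv (r i) ∧ G.comp (s i) = p i ∧ G.comp (r i) = p i ∧
      Relation.TransGen G.pred (s i) (r i) ∧
      G.isSend (s' i) ∧ G.isRecv (r' i) ∧ G.comp (s' i) = q i ∧ G.comp (r' i) = q i ∧
      Relation.TransGen G.pred (s' i) (r' i) ∧
      G.matched (s i) (r' i) ∧ G.matched (s' i) (r i))
    (hne : ∀ i < n, p i ≠ q i)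
    (hdisj : ∀ i < n, ∀ j < n, i ≠ j →
      p i ≠ p j ∧ p i ≠ q j ∧ q i ≠ p j ∧ q i ≠ q j)
    (hbudget : (∑ i ∈ Finset.range n, (B (p i) + B (q i))) ≤ n)
    (hsafe : DeadlockFree G B) :
    (∀ i < n, 1 ≤ B (p i) + B (q i)) ∧ (∀ i < n, B (p i) + B (q i) = 1) := by
  have key : ∀ i < n, 1 ≤ B (p i) + B (q i) := by
    intro i hi
    by_contra hcon
    have hBp : B (p i) = 0 := by omega
    have hBq : B (q i) = 0 := by omega
    obtain ⟨hsi, hri, hcsi, hcri, htsi, hsi', hri', hcsi', hcri', htsi', hm1, hm2⟩ :=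
      hring i hi
    -- the invariant holds initially
    have hinit : BAPAux.WInv G (p i) (q i) (s i) (s' i) (init G B) := by
      refine ⟨hBp, hBq, fun v _ => rfl, ?_, ?_, ?_, ?_⟩
      · intro v hv
        simp [init, if_neg (BAPAux.tg_not_start hwf hv)]
      · intro v hv
        simp [init, if_neg (BAPAux.tg_not_start hwf hv)]
      · have : ¬ G.isStart (s i) := fun h => hwf.start_not_send _ h hsi
        simp [init, if_neg this]
      · have : ¬ G.isStart (s' i) := fun h => hwf.start_not_send _ h hsi'
        simp [init, if_neg this]
    obtain ⟨l, hl, hmax⟩ := BAPAux.exists_maximal G (init G B)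
    have hcomp := hsafe l hl hmax
    have hfin : BAPAux.WInv G (p i) (q i) (s i) (s' i) (finalSt (init G B) l) :=
      BAPAux.seq_inv _ (fun ρ s t hs hst =>
        BAPAux.winv_step hwf hsi hcsi htsi hsi' hcsi' htsi' hm1 hm2 hs hst) l _ hinit hl
    have hred : (finalSt (init G B) l).col (r i) = Colour.red := hfin.2.2.2.1 _ htsi
    have hgrn := hcomp (r i)
    rw [hred] at hgrn
    exact absurd hgrn (by simp)
  refine ⟨key, ?_⟩
  intro i hi
  by_contra hcon
  have h2 : 2 ≤ B (p i) + B (q i) := by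
    have := key i hi; omega
  have hn : n ≤ ∑ j ∈ Finset.range n, (B (p j) + B (q j)) := by
    calc n = ∑ _j ∈ Finset.range n, 1 := by simp
      _ ≤ _ := Finset.sum_le_sum fun j hj => key j (Finset.mem_range.mp hj)
  have hmem : i ∈ Finset.range n := Finset.mem_range.mpr hi
  have hsplit : ∑ j ∈ Finset.range n, (B (p j) + B (q j)) =
      (B (p i) + B (q i)) + ∑ j ∈ (Finset.range n).erase i, (B (p j) + B (q j)) :=
    (Finset.add_sum_erase _ _ hmem).symm
  have herase : (n - 1 : ℕ) ≤ ∑ j ∈ (Finset.range n).erase i, (B (p j) + B (q j)) := by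
    calc (n - 1 : ℕ) = ∑ _j ∈ (Finset.range n).erase i, 1 := by
          simp [Finset.card_erase_of_mem hmem]
      _ ≤ _ := Finset.sum_le_sum fun j hj =>
          key j (Finset.mem_range.mp (Finset.mem_of_mem_erase hj))
  omega
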